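/- Let H be a finite-dimensional real inner product space, let β > 0, let f : H → ℝ ∪ {+∞} be proper, lower semicontinuous, and convex, and let g : H → ℝ be convex and differentiable with β-Lipschitz gradient. Then for every γ > 0, a point x ∈ H minimizes f + g over H if and only if x is a fixed point of prox_{γf} ∘ (Id − γ∇g), i.e., x = prox_{γf}(x − γ∇g(x)). -/

import Mathlib

open Filter Topology

noncomputable section

/-- Convexity for extended-real-valued functions. -/
def ConvexE {E : Type*} [AddCommGroup E] [Module ℝ E] (f : E → EReal) : Prop :=
  ∀ x y : E, ∀ a b : ℝ, 0 ≤ a → 0 ≤ b → a + b = 1 →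
    f (a • x + b • y) ≤ (a : EReal) * f x + (b : EReal) * f y

open RealInnerProductSpace in
theorem slope_tendsto' {H : Type*} [NormedAddCommGroup H] [InnerProductSpace ℝ H] [CompleteSpace H]
    (g : H → ℝ) (x v gx : H) (hg : HasGradientAt g gx x) :
    Filter.Tendsto (fun t : ℝ => (g (x + t • v) - g x) / t) (𝓝[>] (0:ℝ))
      (𝓝 ⟪gx, v⟫) := by
  have hc : HasDerivAt (fun t : ℝ => x + t • v) v 0 := by
    simpa using ((hasDerivAt_id (0:ℝ)).smul_const v).const_add x
  have hf : HasFDerivAt g ((InnerProductSpace.toDual ℝ H) gx) (x + (0:ℝ) • v) := by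
    simpa using hg.hasFDerivAt
  have hφ : HasDerivAt (fun t : ℝ => g (x + t • v)) ⟪gx, v⟫ 0 := by
    have h := hf.comp_hasDerivAt 0 hc
    simp at h
    exact h
  have h := hasDerivAt_iff_tendsto_slope.mp hφ
  have h2 := h.mono_left (nhdsWithin_mono 0 (by intro t ht; exact ne_of_gt ht))
  refine h2.congr' ?_
  filter_upwards [self_mem_nhdsWithin] with t ht
  simp [slope_def_field, div_eq_inv_mul]

open RealInnerProductSpace in
theorem grad_ineq' {H : Type*} [NormedAddCommGroup H] [InnerProductSpace ℝ H] [CompleteSpace H]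
    (g : H → ℝ) (x y gx : H) (hg : HasGradientAt g gx x)
    (hconv : ConvexOn ℝ Set.univ g) :
    g x + ⟪gx, y - x⟫ ≤ g y := by
  have key : ⟪gx, y - x⟫ ≤ g y - g x := by
    refine le_of_tendsto (slope_tendsto' g x (y - x) gx hg) ?_
    filter_upwards [Ioc_mem_nhdsGT (by norm_num : (0:ℝ) < 1)]
      with t ht
    obtain ⟨ht0, ht1⟩ := ht
    have hx : x + t • (y - x) = (1 - t) • x + t • y := by module
    have := hconv.2 (Set.mem_univ x) (Set.mem_univ y)
      (by linarith : (0:ℝ) ≤ 1 - t) (le_of_lt ht0) (by ring)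
    simp only [smul_eq_mul] at this
    rw [div_le_iff₀ ht0, hx]
    calc g ((1-t) • x + t • y) - g x ≤ (1-t) * g x + t * g y - g x := by linarith
      _ = (g y - g x) * t := by ring
  linarith

open RealInnerProductSpace in
/-- Fixed-point characterization of the minimizers of `f + g`: for every `γ > 0`,
`x` minimizes `f + g` if and only if `x = prox_{γ f}(x - γ ∇g x)`, where the proximal
point is expressed through its defining minimization property. -/
theorem minimizer_iff_fixed_point
    {H : Type*} [NormedAddCommGroup H] [InnerProductSpace ℝ H] [FiniteDimensional ℝ H]
    (β : ℝ) (hβ : 0 < β)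
    (f : H → EReal)
    (hf_proper : ∃ z, f z ≠ ⊤) (hf_ne_bot : ∀ z, f z ≠ ⊥)
    (hf_lsc : LowerSemicontinuous f) (hf_convex : ConvexE f)
    (g : H → ℝ) (g' : H → H)
    (hg_convex : ConvexOn ℝ Set.univ g)
    (hg_grad : ∀ z : H, HasGradientAt g (g' z) z)
    (hg_lip : ∀ z w : H, ‖g' z - g' w‖ ≤ β * ‖z - w‖)
    (x : H) :
    ∀ γ : ℝ, 0 < γ → ∀ p : H,
      (∀ y : H,
        (γ : EReal) * f p + ((1/2 * ‖(x - γ • g' x) - p‖^2 : ℝ) : EReal) ≤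
          (γ : EReal) * f y + ((1/2 * ‖(x - γ • g' x) - y‖^2 : ℝ) : EReal)) →
      ((∀ y : H, f x + (g x : EReal) ≤ f y + (g y : EReal)) ↔ x = p) := by
  intro γ hγ p hp
  obtain ⟨z, hz⟩ := hf_proper
  set u := x - γ • g' x with hu
  have hγE : (0:EReal) < (γ:ℝ) := by exact_mod_cast hγ
  obtain ⟨a0, ha0⟩ : ∃ a0 : ℝ, f z = (a0 : EReal) :=
    ⟨(f z).toReal, (EReal.coe_toReal hz (hf_ne_bot z)).symm⟩
  have fin_of : ∀ w : H, ∀ r s : ℝ, (γ:EReal) * f w + (r:EReal) ≤ (s:EReal) → f w ≠ ⊤ := by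
    intro w r s h hw
    rw [hw, EReal.mul_top_of_pos hγE, EReal.top_add_coe] at h
    exact absurd h (by simp)
  -- f p is finite
  have hfp_ne_top : f p ≠ ⊤ := by
    refine fin_of p _ (γ * a0 + 1/2 * ‖u - z‖^2) ((hp z).trans_eq ?_)
    rw [ha0]; norm_cast
  obtain ⟨b, hb⟩ : ∃ b : ℝ, f p = (b : EReal) :=
    ⟨(f p).toReal, (EReal.coe_toReal hfp_ne_top (hf_ne_bot p)).symm⟩
  constructor
  · -- minimizer → fixed point
    intro hmin
    have hfx_ne_top : f x ≠ ⊤ := by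
      intro h
      have h2 := hmin z
      rw [h, ha0, EReal.top_add_coe] at h2
      have : ((a0:EReal) + (g z : EReal)) < ⊤ := by
        rw [← EReal.coe_add]; exact EReal.coe_lt_top _
      exact absurd (top_le_iff.mp h2) this.ne
    obtain ⟨a, hA⟩ : ∃ a : ℝ, f x = (a : EReal) :=
      ⟨(f x).toReal, (EReal.coe_toReal hfx_ne_top (hf_ne_bot x)).symm⟩
    -- key claim: a ≤ c + ⟪∇g x, y - x⟫ for any y with f y = c
    have star : ∀ y : H, ∀ c : ℝ, f y = (c:EReal) → a ≤ c + ⟪g' x, y - x⟫ := by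
      intro y c hc
      refine ge_of_tendsto ((slope_tendsto' g x (y-x) (g' x) (hg_grad x)).const_add c) ?_
      filter_upwards [Ioc_mem_nhdsGT (by norm_num : (0:ℝ) < 1)]
        with t ht
      obtain ⟨ht0, ht1⟩ := ht
      set yt := x + t • (y - x) with hyt
      have hxt : (1-t) • x + t • y = yt := by rw [hyt]; module
      have hyt_le : f yt ≤ (((1-t)*a + t*c : ℝ) : EReal) := by
        have h3 := hf_convex x y (1-t) t (by linarith) ht0.le (by ring)
        rw [hA, hc, hxt] at h3
        exact h3.trans_eq (by norm_cast)
      have hyt_ne_top : f yt ≠ ⊤ := (hyt_le.trans_lt (EReal.coe_lt_top _)).ne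
      obtain ⟨d, hd⟩ : ∃ d : ℝ, f yt = (d : EReal) :=
        ⟨(f yt).toReal, (EReal.coe_toReal hyt_ne_top (hf_ne_bot yt)).symm⟩
      have hdle : d ≤ (1-t)*a + t*c := by rw [hd] at hyt_le; exact_mod_cast hyt_le
      have hmy := hmin yt
      rw [hA, hd] at hmy
      have hmyr : a + g x ≤ d + g yt := by exact_mod_cast hmy
      have h4 : (a - c) ≤ (g yt - g x) / t := by
        rw [le_div_iff₀ ht0]; nlinarith
      linarith
    have h1 := star p b hb
    have hpx := hp x
    rw [hA, hb] at hpx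
    have hpxr : γ*b + 1/2*‖u-p‖^2 ≤ γ*a + 1/2*‖u-x‖^2 := by exact_mod_cast hpx
    have e1 : u - x = -(γ • g' x) := by rw [hu]; abel
    have e2 : u - p = (x - p) - γ • g' x := by rw [hu]; abel
    have n1 : ‖u - x‖^2 = ‖γ • g' x‖^2 := by rw [e1, norm_neg]
    have n2 : ‖u - p‖^2 = ‖x-p‖^2 - 2*⟪x-p, γ • g' x⟫ + ‖γ • g' x‖^2 := by
      rw [e2]; exact norm_sub_sq_real _ _
    have i1 : ⟪x - p, γ • g' x⟫ = γ * ⟪x-p, g' x⟫ := real_inner_smul_right _ _ _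
    have i2 : ⟪g' x, p - x⟫ = -⟪x - p, g' x⟫ := by
      rw [real_inner_comm, ← inner_neg_left]; congr 1; abel
    rw [n1, n2, i1] at hpxr
    rw [i2] at h1
    have hN : ‖x - p‖^2 ≤ 0 := by
      nlinarith [mul_le_mul_of_nonneg_left h1 hγ.le]
    have : x - p = 0 := by
      have h5 : ‖x - p‖ = 0 := by nlinarith [norm_nonneg (x - p)]
      exact norm_eq_zero.mp h5
    exact sub_eq_zero.mp this
  · -- fixed point → minimizer
    intro hxp
    subst hxp
    have hfx_ne_top : f x ≠ ⊤ := hfp_ne_top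
    obtain ⟨a, hA⟩ : ∃ a : ℝ, f x = (a : EReal) := ⟨b, hb⟩
    intro y
    by_cases hyT : f y = ⊤
    · rw [hyT, EReal.top_add_coe]; exact le_top
    obtain ⟨c, hc⟩ : ∃ c : ℝ, f y = (c : EReal) :=
      ⟨(f y).toReal, (EReal.coe_toReal hyT (hf_ne_bot y)).symm⟩
    have key : a ≤ c + ⟪g' x, y - x⟫ := by
      have h0 : Filter.Tendsto (fun t : ℝ => t * (1/(2*γ) * ‖y-x‖^2)) (𝓝 0) (𝓝 0) := by
        simpa using (by fun_prop : Continuous fun t : ℝ => t * (1/(2*γ) * ‖y-x‖^2)).tendsto (0:ℝ)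
      have lim : Filter.Tendsto
          (fun t : ℝ => c + ⟪g' x, y - x⟫ + t * (1/(2*γ) * ‖y-x‖^2)) (𝓝[>] (0:ℝ))
          (𝓝 (c + ⟪g' x, y - x⟫)) := by
        simpa using (tendsto_const_nhds.add h0).mono_left nhdsWithin_le_nhds
      refine ge_of_tendsto lim ?_
      filter_upwards [Ioc_mem_nhdsGT (by norm_num : (0:ℝ) < 1)]
        with t ht
      obtain ⟨ht0, ht1⟩ := ht
      set yt := x + t • (y - x) with hyt
      have hxt : (1-t) • x + t • y = yt := by rw [hyt]; module
      have hyt_le : f yt ≤ (((1-t)*a + t*c : ℝ) : EReal) := by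
        have h3 := hf_convex x y (1-t) t (by linarith) ht0.le (by ring)
        rw [hA, hc, hxt] at h3
        exact h3.trans_eq (by norm_cast)
      have hyt_ne_top : f yt ≠ ⊤ := (hyt_le.trans_lt (EReal.coe_lt_top _)).ne
      obtain ⟨d, hd⟩ : ∃ d : ℝ, f yt = (d : EReal) :=
        ⟨(f yt).toReal, (EReal.coe_toReal hyt_ne_top (hf_ne_bot yt)).symm⟩
      have hdle : d ≤ (1-t)*a + t*c := by rw [hd] at hyt_le; exact_mod_cast hyt_le
      have hpyt := hp yt
      rw [hA, hd] at hpyt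
      have hpytr : γ*a + 1/2*‖u-x‖^2 ≤ γ*d + 1/2*‖u-yt‖^2 := by exact_mod_cast hpyt
      have e1 : u - x = -(γ • g' x) := by rw [hu]; abel
      have e3 : u - yt = -(γ • g' x + t • (y - x)) := by rw [hu, hyt]; module
      have n1 : ‖u - x‖^2 = ‖γ • g' x‖^2 := by rw [e1, norm_neg]
      have n3 : ‖u - yt‖^2 = ‖γ • g' x‖^2 + 2*(γ*(t*⟪g' x, y-x⟫)) + t^2*‖y-x‖^2 := by
        have nt : ‖t • (y - x)‖^2 = t^2 * ‖y - x‖^2 := by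
          rw [norm_smul, mul_pow, Real.norm_eq_abs, sq_abs]
        rw [e3, norm_neg, norm_add_sq_real, real_inner_smul_left, real_inner_smul_right, nt]
      rw [n1, n3] at hpytr
      have hdγ : γ * d ≤ γ * ((1-t)*a + t*c) := mul_le_mul_of_nonneg_left hdle hγ.le
      have h5 : γ*t*a ≤ γ*t*c + γ*t*⟪g' x, y-x⟫ + 1/2*t^2*‖y-x‖^2 := by nlinarith
      have hγt : (0:ℝ) < γ * t := mul_pos hγ ht0
      rw [← mul_le_mul_iff_of_pos_left hγt]
      have expand : γ*t*(c + ⟪g' x, y - x⟫ + t * (1/(2*γ) * ‖y-x‖^2)) =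
          γ*t*c + γ*t*⟪g' x, y-x⟫ + 1/2*t^2*‖y-x‖^2 := by
        field_simp
      rw [expand]
      exact h5
    have hgr := grad_ineq' g x y (g' x) (hg_grad x) hg_convex
    rw [hA, hc]
    have hfin : a + g x ≤ c + g y := by linarith
    exact_mod_cast hfin
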